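/- Let d be a positive integer, ε > 0, and ν a positive integer with ν ≤ d. Then for all z > 0: z(z+1)^ν − (1+ε)z^{ν+1} ≤ (1+1/ε)^d · d^d. -/

import Mathlib

lemma amgm (n : ℕ) (x y : ℝ) (hx : 0 ≤ x) (hy : 0 ≤ y) :
    x * y ^ n ≤ ((x + n * y) / (n + 1)) ^ (n + 1) := by
  have hn1 : (0:ℝ) < (n:ℝ) + 1 := by positivity
  have hw : (1:ℝ)/(n+1) + (n:ℝ)/(n+1) = 1 := by field_simp; ring
  have h := Real.geom_mean_le_arith_mean2_weighted
    (by positivity : (0:ℝ) ≤ 1/((n:ℝ)+1)) (by positivity : (0:ℝ) ≤ (n:ℝ)/((n:ℝ)+1)) hx hy hw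
  have h2 := pow_le_pow_left₀ (by positivity) h (n+1)
  calc x * y ^ n
      = (x ^ ((1:ℝ)/((n:ℝ)+1)) * y ^ ((n:ℝ)/((n:ℝ)+1))) ^ (n+1) := by
        rw [mul_pow, ← Real.rpow_natCast (x ^ ((1:ℝ)/((n:ℝ)+1))) (n+1),
            ← Real.rpow_natCast (y ^ ((n:ℝ)/((n:ℝ)+1))) (n+1),
            ← Real.rpow_mul hx, ← Real.rpow_mul hy]
        push_cast
        rw [one_div, inv_mul_cancel₀ hn1.ne', Real.rpow_one,
            div_mul_cancel₀ _ hn1.ne', Real.rpow_natCast]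
    _ ≤ (1/((n:ℝ)+1) * x + (n:ℝ)/((n:ℝ)+1) * y) ^ (n+1) := h2
    _ = ((x + n * y) / (n + 1)) ^ (n + 1) := by ring_nf

lemma pow_sub_pow_le' (k : ℕ) (a b : ℝ) (hb : 0 ≤ b) (hba : b ≤ a) :
    a ^ (k+1) - b ^ (k+1) ≤ ((k:ℝ)+1) * a ^ k * (a - b) := by
  rw [← geom_sum₂_mul a b (k+1)]
  have ha : 0 ≤ a := hb.trans hba
  have hsum : (∑ i ∈ Finset.range (k+1), a ^ i * b ^ (k - i)) ≤ ((k:ℝ)+1) * a ^ k := by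
    calc (∑ i ∈ Finset.range (k+1), a ^ i * b ^ (k - i))
        ≤ ∑ i ∈ Finset.range (k+1), a ^ k := by
          apply Finset.sum_le_sum
          intro i hi
          have hik : i ≤ k := Nat.lt_succ_iff.mp (Finset.mem_range.mp hi)
          calc a ^ i * b ^ (k - i) ≤ a ^ i * a ^ (k - i) := by
                exact mul_le_mul_of_nonneg_left (pow_le_pow_left₀ hb hba _) (pow_nonneg ha _)
            _ = a ^ k := by rw [← pow_add]; congr 1; omega
      _ = ((k:ℝ)+1) * a ^ k := by
          rw [Finset.sum_const, Finset.card_range]; push_cast [Nat.cast_succ]; ring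
  have hab : 0 ≤ a - b := sub_nonneg.mpr hba
  calc (∑ i ∈ Finset.range (k+1), a ^ i * b ^ (k+1-1 - i)) * (a - b)
      ≤ (((k:ℝ)+1) * a ^ k) * (a - b) := by
        apply mul_le_mul_of_nonneg_right _ hab
        simpa using hsum
    _ = ((k:ℝ)+1) * a ^ k * (a - b) := by ring

lemma key_ineq (ν : ℕ) (hν : 0 < ν) (z : ℝ) (hz : 0 ≤ z) :
    (z + (ν:ℝ)/((ν:ℝ)+1)) ^ (ν+1) ≤ (((ν:ℝ)+1)/(ν:ℝ))^(ν+1) * z^(ν+1) + (ν:ℝ)^ν := by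
  have hν0 : (0:ℝ) < ν := by exact_mod_cast hν
  have hbnn : (0:ℝ) ≤ ((ν:ℝ)+1)/(ν:ℝ) * z := by positivity
  have hbp : (((ν:ℝ)+1)/(ν:ℝ))^(ν+1) * z^(ν+1) = (((ν:ℝ)+1)/(ν:ℝ) * z) ^ (ν+1) := by
    rw [mul_pow]
  rw [hbp]
  rcases le_or_gt (z + (ν:ℝ)/((ν:ℝ)+1)) (((ν:ℝ)+1)/(ν:ℝ) * z) with hab | hab
  · have h := pow_le_pow_left₀ (by positivity : (0:ℝ) ≤ z + (ν:ℝ)/((ν:ℝ)+1)) hab (ν+1)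
    nlinarith [pow_nonneg hν0.le ν]
  · obtain ⟨k, rfl⟩ : ∃ k, ν = k + 1 := ⟨ν - 1, (Nat.succ_pred_eq_of_pos hν).symm⟩
    push_cast at *
    set n : ℝ := (k:ℝ) + 1 with hn
    set a : ℝ := z + n/(n+1) with hadef
    set b : ℝ := (n+1)/n * z with hbdef
    have hnp : (0:ℝ) < n := hν0
    have hn1 : (0:ℝ) < n + 1 := by linarith
    have han : (0:ℝ) ≤ a := by positivity
    have hdiff : a - b = (n - a)/n := by
      rw [hadef, hbdef]; field_simp; ring
    have hsub : a^(k+2) - b^(k+2) ≤ (n+1) * a^(k+1) * (a-b) := by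
      have h := pow_sub_pow_le' (k+1) a b hbnn hab.le
      push_cast at h
      rw [← hn] at h
      exact h
    have haltn : a < n := by
      have h0 : 0 < a - b := sub_pos.mpr hab
      rw [hdiff] at h0
      by_contra hcon
      push_neg at hcon
      have : (n - a)/n ≤ 0 := div_nonpos_of_nonpos_of_nonneg (by linarith) hnp.le
      linarith
    -- AM-GM : (n - a) * (a/n)^(k+1) ≤ (n/(n+1))^(k+2)
    have hag := amgm (k+1) (n - a) (a/n) (by linarith) (by positivity)
    have harg : ((n - a) + ((k+1:ℕ):ℝ) * (a/n)) / (((k+1:ℕ):ℝ) + 1) = n/(n+1) := by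
      push_cast
      rw [← hn]
      rw [div_eq_div_iff (by positivity) (by positivity)]
      field_simp; ring
    rw [harg] at hag
    -- deduce a^(k+1) * (n-a) ≤ n^(k+1) * (n/(n+1))^(k+2)
    have hkey2 : (n - a) * a^(k+1) ≤ n^(k+1) * (n/(n+1))^(k+2) := by
      have hmul := mul_le_mul_of_nonneg_right hag (by positivity : (0:ℝ) ≤ n^(k+1))
      calc (n - a) * a^(k+1) = (n - a) * (a/n)^(k+1) * n^(k+1) := by
            rw [mul_assoc, ← mul_pow, div_mul_cancel₀ _ hnp.ne']
        _ ≤ (n/(n+1))^(k+2) * n^(k+1) := hmul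
        _ = n^(k+1) * (n/(n+1))^(k+2) := by ring
    have hfin : a^(k+2) - b^(k+2) ≤ n^(k+1) := by
      have h2 : (n+1) * a^(k+1) * (a - b) = ((n+1)/n) * ((n - a) * a^(k+1)) := by
        rw [hdiff]; field_simp
      calc a^(k+2) - b^(k+2) ≤ (n+1) * a^(k+1) * (a - b) := hsub
        _ = ((n+1)/n) * ((n - a) * a^(k+1)) := h2
        _ ≤ ((n+1)/n) * (n^(k+1) * (n/(n+1))^(k+2)) := by
            apply mul_le_mul_of_nonneg_left hkey2 (by positivity)
        _ = n^(k+1) * (n/(n+1))^(k+1) := by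
            rw [div_pow, div_pow]
            field_simp
            ring
        _ ≤ n^(k+1) * 1 := by
            apply mul_le_mul_of_nonneg_left _ (by positivity)
            apply pow_le_one₀ (by positivity)
            rw [div_le_one hn1]; linarith
        _ = n^(k+1) := by ring
    show a ^ (k+2) ≤ b ^ (k+2) + n ^ (k+1)
    linarith [hfin]

theorem z_bound (d ν : ℕ) (hd : 0 < d) (hν : 0 < ν) (hνd : ν ≤ d)
    (ε z : ℝ) (hε : 0 < ε) (hz : 0 < z) :
    z * (z + 1) ^ ν - (1 + ε) * z ^ (ν + 1) ≤ (1 + 1 / ε) ^ d * (d : ℝ) ^ d := by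
  have hε1 : (1:ℝ) ≤ 1 + 1/ε := by
    have : 0 < 1/ε := by positivity
    linarith
  have hνR : (0:ℝ) < ν := by exact_mod_cast hν
  have hM : (ν:ℝ)^ν * (1+1/ε)^ν ≤ (1+1/ε)^d * (d:ℝ)^d := by
    have h1 : ((ν:ℝ))^ν ≤ (d:ℝ)^d := by
      calc ((ν:ℝ))^ν ≤ (d:ℝ)^ν := by
            apply pow_le_pow_left₀ hνR.le; exact_mod_cast hνd
        _ ≤ (d:ℝ)^d := by
            apply pow_le_pow_right₀ _ hνd
            exact_mod_cast hd
    have h2 : (1+1/ε)^ν ≤ (1+1/ε)^d := pow_le_pow_right₀ hε1 hνd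
    calc (ν:ℝ)^ν * (1+1/ε)^ν ≤ (d:ℝ)^d * (1+1/ε)^d := by
          apply mul_le_mul h1 h2 (by positivity) (by positivity)
      _ = (1+1/ε)^d * (d:ℝ)^d := by ring
  have hMain : z * (z + 1) ^ ν - (1 + ε) * z ^ (ν + 1) ≤ (ν:ℝ)^ν * (1+1/ε)^ν := by
    rcases le_or_gt ((((ν:ℝ)+1)/(ν:ℝ))^(ν+1)) (1+ε) with hcase | hcase
    · -- Case A : (1+1/ν)^(ν+1) ≤ 1+ε
      have hA : z*(z+1)^ν ≤ (z + (ν:ℝ)/((ν:ℝ)+1))^(ν+1) := by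
        have h := amgm ν z (z+1) hz.le (by linarith)
        rw [show (z + (ν:ℝ) * (z+1)) / ((ν:ℝ)+1) = z + (ν:ℝ)/((ν:ℝ)+1) by
          field_simp; ring] at h
        exact h
      have hK := key_ineq ν hν z hz.le
      have h3 : (((ν:ℝ)+1)/(ν:ℝ))^(ν+1) * z^(ν+1) ≤ (1+ε)*z^(ν+1) :=
        mul_le_mul_of_nonneg_right hcase (by positivity)
      have h4 : z * (z + 1) ^ ν - (1 + ε) * z ^ (ν + 1) ≤ (ν:ℝ)^ν := by linarith
      have h5 : (ν:ℝ)^ν ≤ (ν:ℝ)^ν * (1+1/ε)^ν :=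
        le_mul_of_one_le_right (by positivity) (one_le_pow₀ hε1)
      linarith
    · -- Case B : 1+ε ≤ (1+1/ν)^(ν+1)
      obtain ⟨k, rfl⟩ : ∃ k, ν = k + 1 := ⟨ν - 1, (Nat.succ_pred_eq_of_pos hν).symm⟩
      push_cast at hcase hνR ⊢
      have hz1 : (0:ℝ) < z + 1 := by linarith
      -- Bernoulli
      have hBer : (z+1)^(k+1) - ((k:ℝ)+1)*(z+1)^k ≤ z^(k+1) := by
        have hle : 1/(z+1) ≤ 1 := by rw [div_le_one hz1]; linarith
        have h0 : (1:ℝ) + ((k+1:ℕ):ℝ) * (-(1/(z+1))) ≤ (1 + (-(1/(z+1))))^(k+1) :=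
          one_add_mul_le_pow (by linarith) (k+1)
        push_cast at h0
        have hmul := mul_le_mul_of_nonneg_right h0 (pow_nonneg hz1.le (k+1))
        have e1 : (1 + ((k:ℝ)+1)*(-(1/(z+1)))) * (z+1)^(k+1)
            = (z+1)^(k+1) - ((k:ℝ)+1)*(z+1)^k := by
          rw [pow_succ]; field_simp; ring
        have e2 : (1 + (-(1/(z+1))))^(k+1) * (z+1)^(k+1) = z^(k+1) := by
          rw [← mul_pow]; congr 1; field_simp; ring
        rw [e1, e2] at hmul
        exact hmul
      set X : ℝ := ((k:ℝ)+1)*(1+ε) - ε*(z+1) with hXdef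
      have hf : z*(z+1)^(k+1) - (1+ε)*z^(k+1+1) ≤ z*(z+1)^k * X := by
        have h4 : (1+ε)*z*((z+1)^(k+1) - ((k:ℝ)+1)*(z+1)^k) ≤ (1+ε)*z*z^(k+1) :=
          mul_le_mul_of_nonneg_left hBer (by positivity)
        calc z*(z+1)^(k+1) - (1+ε)*z^(k+1+1)
            = z*(z+1)^(k+1) - (1+ε)*z*z^(k+1) := by ring
          _ ≤ z*(z+1)^(k+1) - (1+ε)*z*((z+1)^(k+1) - ((k:ℝ)+1)*(z+1)^k) := by linarith
          _ = z*(z+1)^k * X := by rw [hXdef]; ring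
      rcases le_or_gt X 0 with hX | hX
      · have h5 : z*(z+1)^k * X ≤ 0 :=
          mul_nonpos_of_nonneg_of_nonpos (by positivity) hX
        have h6 : (0:ℝ) ≤ ((k:ℝ)+1)^(k+1) * (1+1/ε)^(k+1) := by positivity
        linarith
      · -- X > 0
        have h5 : z*(z+1)^k * X ≤ (z+1)^(k+1) * X := by
          apply mul_le_mul_of_nonneg_right _ hX.le
          calc z*(z+1)^k ≤ (z+1)*(z+1)^k :=
                mul_le_mul_of_nonneg_right (by linarith) (by positivity)
            _ = (z+1)^(k+1) := (pow_succ' _ _).symm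
        have hag := amgm (k+1) X (ε*(z+1)/((k:ℝ)+1)) hX.le (by positivity)
        have hk1 : ((k:ℝ)+1) ≠ 0 := by positivity
        have hk2 : ((k:ℝ)+2) ≠ 0 := by positivity
        have harg2 : (X + ((k+1:ℕ):ℝ) * (ε*(z+1)/((k:ℝ)+1))) / (((k+1:ℕ):ℝ) + 1)
            = ((k:ℝ)+1)*(1+ε)/((k:ℝ)+2) := by
          rw [hXdef]; push_cast; field_simp; ring
        rw [harg2] at hag
        have h7 : (z+1)^(k+1) * X
            ≤ (((k:ℝ)+1)*(1+ε)/((k:ℝ)+2))^(k+2) * (((k:ℝ)+1)/ε)^(k+1) := by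
          have hmul := mul_le_mul_of_nonneg_right hag
            (by positivity : (0:ℝ) ≤ (((k:ℝ)+1)/ε)^(k+1))
          have e2 : (ε*(z+1)/((k:ℝ)+1))^(k+1) * (((k:ℝ)+1)/ε)^(k+1) = (z+1)^(k+1) := by
            rw [← mul_pow]; congr 1; field_simp
          calc (z+1)^(k+1) * X
              = X * ((ε*(z+1)/((k:ℝ)+1))^(k+1) * (((k:ℝ)+1)/ε)^(k+1)) := by
                rw [e2]; ring
            _ = X * (ε*(z+1)/((k:ℝ)+1))^(k+1) * (((k:ℝ)+1)/ε)^(k+1) := by ring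
            _ ≤ (((k:ℝ)+1)*(1+ε)/((k:ℝ)+2))^(k+1+1) * (((k:ℝ)+1)/ε)^(k+1) := hmul
            _ = (((k:ℝ)+1)*(1+ε)/((k:ℝ)+2))^(k+2) * (((k:ℝ)+1)/ε)^(k+1) := by norm_num
        have hP : (1+ε) * ((k:ℝ)+1)^(k+2) ≤ ((k:ℝ)+2)^(k+2) := by
          have := mul_le_mul_of_nonneg_right hcase.le
            (by positivity : (0:ℝ) ≤ ((k:ℝ)+1)^(k+2))
          calc (1+ε) * ((k:ℝ)+1)^(k+2)
              ≤ (((k:ℝ)+1+1)/((k:ℝ)+1))^(k+1+1) * ((k:ℝ)+1)^(k+2) := this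
            _ = ((k:ℝ)+2)^(k+2) := by
                rw [show (k:ℝ)+1+1 = (k:ℝ)+2 by ring, show k+1+1 = k+2 from rfl,
                   div_pow, div_mul_cancel₀]
                positivity
        have h8 : (((k:ℝ)+1)*(1+ε)/((k:ℝ)+2))^(k+2) * (((k:ℝ)+1)/ε)^(k+1)
            ≤ ((k:ℝ)+1)^(k+1) * (1+1/ε)^(k+1) := by
          rw [div_pow, div_pow, div_mul_div_comm, div_le_iff₀ (by positivity)]
          have e3 : (1+1/ε)^(k+1) * ε^(k+1) = (1+ε)^(k+1) := by
            rw [← mul_pow]; congr 1; field_simp; ring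
          calc (((k:ℝ)+1)*(1+ε))^(k+2) * ((k:ℝ)+1)^(k+1)
              = ((1+ε) * ((k:ℝ)+1)^(k+2)) * ((1+ε)^(k+1) * ((k:ℝ)+1)^(k+1)) := by
                rw [mul_pow]; ring
            _ ≤ ((k:ℝ)+2)^(k+2) * ((1+ε)^(k+1) * ((k:ℝ)+1)^(k+1)) :=
                mul_le_mul_of_nonneg_right hP (by positivity)
            _ = ((k:ℝ)+1)^(k+1) * ((1+1/ε)^(k+1) * ε^(k+1)) * ((k:ℝ)+2)^(k+2) := by
                rw [e3]; ring
            _ = ((k:ℝ)+1)^(k+1) * (1+1/ε)^(k+1) * (((k:ℝ)+2)^(k+2) * ε^(k+1)) := by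
                ring
        calc z*(z+1)^(k+1) - (1+ε)*z^(k+1+1) ≤ z*(z+1)^k * X := hf
          _ ≤ (z+1)^(k+1) * X := h5
          _ ≤ (((k:ℝ)+1)*(1+ε)/((k:ℝ)+2))^(k+2) * (((k:ℝ)+1)/ε)^(k+1) := h7
          _ ≤ ((k:ℝ)+1)^(k+1) * (1+1/ε)^(k+1) := h8
  linarith
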